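/- Let D be a probability measure on α × Fin k, let Q and Q' be probability measures on Θ, and let g : Θ × α → Fin k be a measurable classifier. Then |R_D(Q) − R_D(Q')| ≤ Dis_D(Q,Q'); that is, the difference of the Gibbs risks of the two posteriors is bounded by their expected decision-boundary disagreement. (Lemma 3.) -/

import Mathlib

open MeasureTheory

lemma integrable_ite_indicator {Ω : Type*} [MeasurableSpace Ω] (μ : Measure Ω)
    [IsFiniteMeasure μ] (P : Ω → Prop) [DecidablePred P] (hs : MeasurableSet {ω | P ω}) :
    Integrable (fun ω => if P ω then (1 : ℝ) else 0) μ := by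
  refine (integrable_const (1 : ℝ)).mono'
    ((measurable_const.ite hs measurable_const).aestronglyMeasurable) ?_
  filter_upwards with ω
  by_cases h : P ω <;> simp [h]

/-- Lemma 3: the difference of the Gibbs risks of two posteriors is bounded by
their expected decision-boundary disagreement:
`|R_D(Q) − R_D(Q')| ≤ Dis_D(Q,Q')`. -/
theorem abs_gibbs_risk_sub_le_disagreement
    {α Θ : Type*} [MeasurableSpace α] [MeasurableSpace Θ]
    {k : ℕ} (hk : 2 ≤ k)
    (D : Measure (α × Fin k)) [IsProbabilityMeasure D]
    (Q Q' : Measure Θ) [IsProbabilityMeasure Q] [IsProbabilityMeasure Q']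
    (g : Θ × α → Fin k) (hg : Measurable g) :
    |(∫ p, ∫ θ, (if g (θ, p.1) ≠ p.2 then (1 : ℝ) else 0) ∂Q ∂D) -
        ∫ p, ∫ θ', (if g (θ', p.1) ≠ p.2 then (1 : ℝ) else 0) ∂Q' ∂D| ≤
      ∫ p, ∫ θ, ∫ θ',
        (if g (θ, p.1) ≠ g (θ', p.1) then (1 : ℝ) else 0) ∂Q' ∂Q ∂D := by
  classical
  have measθ : ∀ x : α, Measurable fun θ : Θ => g (θ, x) := fun x =>
    hg.comp (measurable_id.prodMk measurable_const)
  -- measurability of the basic indicator as a function of (p, θ)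
  have measH : Measurable fun q : (α × Fin k) × Θ =>
      (if g (q.2, q.1.1) ≠ q.1.2 then (1 : ℝ) else 0) := by
    refine Measurable.ite ?_ measurable_const measurable_const
    have h1 : Measurable fun q : (α × Fin k) × Θ => g (q.2, q.1.1) :=
      hg.comp (measurable_snd.prodMk (measurable_fst.comp measurable_fst))
    exact (measurableSet_eq_fun h1
      (measurable_snd.comp measurable_fst)).compl
  -- measurability of the disagreement indicator
  have measK : Measurable fun q : ((α × Fin k) × Θ) × Θ =>
      (if g (q.1.2, q.1.1.1) ≠ g (q.2, q.1.1.1) then (1 : ℝ) else 0) := by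
    refine Measurable.ite ?_ measurable_const measurable_const
    have h1 : Measurable fun q : ((α × Fin k) × Θ) × Θ => g (q.1.2, q.1.1.1) :=
      hg.comp ((measurable_snd.comp measurable_fst).prodMk
        (measurable_fst.comp (measurable_fst.comp measurable_fst)))
    have h2 : Measurable fun q : ((α × Fin k) × Θ) × Θ => g (q.2, q.1.1.1) :=
      hg.comp (measurable_snd.prodMk
        (measurable_fst.comp (measurable_fst.comp measurable_fst)))
    exact (measurableSet_eq_fun h1 h2).compl
  -- per-point indicator integrability
  have int_h : ∀ (μ : Measure Θ) [IsProbabilityMeasure μ], ∀ p : α × Fin k,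
      Integrable (fun θ => if g (θ, p.1) ≠ p.2 then (1 : ℝ) else 0) μ := by
    intro μ _ p
    have hs : MeasurableSet {θ : Θ | g (θ, p.1) ≠ p.2} :=
      ((measθ p.1) (measurableSet_singleton p.2)).compl
    exact integrable_ite_indicator μ _ hs
  have int_k : ∀ p : α × Fin k, ∀ θ : Θ,
      Integrable (fun θ' => if g (θ, p.1) ≠ g (θ', p.1) then (1 : ℝ) else 0) Q' := by
    intro p θ
    have hs : MeasurableSet {θ' : Θ | g (θ, p.1) ≠ g (θ', p.1)} :=
      (measurableSet_eq_fun measurable_const (measθ p.1)).compl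
    exact integrable_ite_indicator Q' _ hs
  -- key pointwise bound
  have key : ∀ p : α × Fin k,
      |(∫ θ, (if g (θ, p.1) ≠ p.2 then (1 : ℝ) else 0) ∂Q) -
        ∫ θ', (if g (θ', p.1) ≠ p.2 then (1 : ℝ) else 0) ∂Q'| ≤
      ∫ θ, ∫ θ', (if g (θ, p.1) ≠ g (θ', p.1) then (1 : ℝ) else 0) ∂Q' ∂Q := by
    intro p
    set h : Θ → ℝ := fun θ => if g (θ, p.1) ≠ p.2 then (1 : ℝ) else 0 with hh
    have intQ : Integrable h Q := int_h Q p
    have intQ' : Integrable h Q' := int_h Q' p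
    have e1 : (∫ θ, h θ ∂Q) - ∫ θ', h θ' ∂Q' =
        ∫ θ, ∫ θ', (h θ - h θ') ∂Q' ∂Q := by
      have einner : ∀ θ, ∫ θ', (h θ - h θ') ∂Q' = h θ - ∫ θ', h θ' ∂Q' := by
        intro θ
        rw [integral_sub (integrable_const _) intQ']
        simp
      simp_rw [einner]
      rw [integral_sub intQ (integrable_const _)]
      simp
    rw [e1, ← Real.norm_eq_abs]
    calc ‖∫ θ, ∫ θ', (h θ - h θ') ∂Q' ∂Q‖
        ≤ ∫ θ, ‖∫ θ', (h θ - h θ') ∂Q'‖ ∂Q := by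
          exact norm_integral_le_integral_norm _
      _ ≤ ∫ θ, ∫ θ', (if g (θ, p.1) ≠ g (θ', p.1) then (1 : ℝ) else 0) ∂Q' ∂Q := by
          refine integral_mono_of_nonneg (Filter.Eventually.of_forall fun θ => norm_nonneg _)
            ?_ (Filter.Eventually.of_forall fun θ => ?_)
          · -- integrability of θ ↦ ∫θ' ite ... over Q
            refine (integrable_const (1 : ℝ)).mono' ?_ ?_
            · have hsm : StronglyMeasurable fun q : ((α × Fin k) × Θ) × Θ =>
                  (if g (q.1.2, q.1.1.1) ≠ g (q.2, q.1.1.1) then (1 : ℝ) else 0) :=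
                measK.stronglyMeasurable
              have := hsm.integral_prod_right' (ν := Q')
              exact ((this.comp_measurable
                ((measurable_const.prodMk measurable_id) :
                  Measurable fun θ : Θ => ((p, θ) : (α × Fin k) × Θ)))).aestronglyMeasurable
            · filter_upwards with θ
              calc ‖∫ θ', (if g (θ, p.1) ≠ g (θ', p.1) then (1 : ℝ) else 0) ∂Q'‖
                  ≤ ∫ θ', ‖(if g (θ, p.1) ≠ g (θ', p.1) then (1 : ℝ) else 0)‖ ∂Q' :=
                    norm_integral_le_integral_norm _
                _ ≤ ∫ _θ', (1 : ℝ) ∂Q' := by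
                    refine integral_mono_of_nonneg
                      (Filter.Eventually.of_forall fun θ' => norm_nonneg _)
                      (integrable_const _)
                      (Filter.Eventually.of_forall fun θ' => ?_)
                    by_cases hc : g (θ, p.1) ≠ g (θ', p.1) <;> simp [hc]
                _ = 1 := by simp
          · calc ‖∫ θ', (h θ - h θ') ∂Q'‖
                ≤ ∫ θ', ‖h θ - h θ'‖ ∂Q' := norm_integral_le_integral_norm _
              _ ≤ ∫ θ', (if g (θ, p.1) ≠ g (θ', p.1) then (1 : ℝ) else 0) ∂Q' := by
                  refine integral_mono_of_nonneg
                    (Filter.Eventually.of_forall fun θ' => norm_nonneg _)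
                    (int_k p θ)
                    (Filter.Eventually.of_forall fun θ' => ?_)
                  by_cases hc : g (θ, p.1) = g (θ', p.1)
                  · simp [hh, hc]
                  · have : ‖h θ - h θ'‖ ≤ 1 := by
                      simp only [hh]
                      by_cases h1 : g (θ, p.1) ≠ p.2 <;>
                        by_cases h2 : g (θ', p.1) ≠ p.2 <;> simp [h1, h2]
                    simpa [hc] using this
  -- outer-level functions and their integrability
  set A : α × Fin k → ℝ := fun p => ∫ θ, (if g (θ, p.1) ≠ p.2 then (1 : ℝ) else 0) ∂Q
    with hA
  set B : α × Fin k → ℝ := fun p => ∫ θ', (if g (θ', p.1) ≠ p.2 then (1 : ℝ) else 0) ∂Q'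
    with hB
  set C : α × Fin k → ℝ := fun p =>
    ∫ θ, ∫ θ', (if g (θ, p.1) ≠ g (θ', p.1) then (1 : ℝ) else 0) ∂Q' ∂Q with hC
  have boundedAB : ∀ (μ : Measure Θ) [IsProbabilityMeasure μ], ∀ p : α × Fin k,
      ‖∫ θ, (if g (θ, p.1) ≠ p.2 then (1 : ℝ) else 0) ∂μ‖ ≤ 1 := by
    intro μ _ p
    calc ‖∫ θ, (if g (θ, p.1) ≠ p.2 then (1 : ℝ) else 0) ∂μ‖
        ≤ ∫ θ, ‖(if g (θ, p.1) ≠ p.2 then (1 : ℝ) else 0)‖ ∂μ :=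
          norm_integral_le_integral_norm _
      _ ≤ ∫ _θ, (1 : ℝ) ∂μ := by
          refine integral_mono_of_nonneg
            (Filter.Eventually.of_forall fun θ => norm_nonneg _)
            (integrable_const _)
            (Filter.Eventually.of_forall fun θ => ?_)
          by_cases hc : g (θ, p.1) ≠ p.2 <;> simp [hc]
      _ = 1 := by simp
  have measA : ∀ (μ : Measure Θ) [IsProbabilityMeasure μ],
      StronglyMeasurable fun p : α × Fin k =>
        ∫ θ, (if g (θ, p.1) ≠ p.2 then (1 : ℝ) else 0) ∂μ := by
    intro μ _
    exact measH.stronglyMeasurable.integral_prod_right' (ν := μ)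
  have intA : Integrable A D := by
    refine (integrable_const (1 : ℝ)).mono' (measA Q).aestronglyMeasurable ?_
    exact Filter.Eventually.of_forall fun p => boundedAB Q p
  have intB : Integrable B D := by
    refine (integrable_const (1 : ℝ)).mono' (measA Q').aestronglyMeasurable ?_
    exact Filter.Eventually.of_forall fun p => boundedAB Q' p
  have measC : StronglyMeasurable C := by
    have h1 : StronglyMeasurable fun q : (α × Fin k) × Θ =>
        ∫ θ', (if g (q.2, q.1.1) ≠ g (θ', q.1.1) then (1 : ℝ) else 0) ∂Q' :=
      measK.stronglyMeasurable.integral_prod_right' (ν := Q')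
    exact h1.integral_prod_right' (ν := Q)
  have intC : Integrable C D := by
    refine (integrable_const (1 : ℝ)).mono' measC.aestronglyMeasurable ?_
    refine Filter.Eventually.of_forall fun p => ?_
    calc ‖C p‖ ≤ ∫ θ, ‖∫ θ', (if g (θ, p.1) ≠ g (θ', p.1) then (1 : ℝ) else 0) ∂Q'‖ ∂Q :=
          norm_integral_le_integral_norm _
      _ ≤ ∫ _θ, (1 : ℝ) ∂Q := by
          refine integral_mono_of_nonneg
            (Filter.Eventually.of_forall fun θ => norm_nonneg _)
            (integrable_const _)
            (Filter.Eventually.of_forall fun θ => ?_)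
          calc ‖∫ θ', (if g (θ, p.1) ≠ g (θ', p.1) then (1 : ℝ) else 0) ∂Q'‖
              ≤ ∫ θ', ‖(if g (θ, p.1) ≠ g (θ', p.1) then (1 : ℝ) else 0)‖ ∂Q' :=
                norm_integral_le_integral_norm _
            _ ≤ ∫ _θ', (1 : ℝ) ∂Q' := by
                refine integral_mono_of_nonneg
                  (Filter.Eventually.of_forall fun θ' => norm_nonneg _)
                  (integrable_const _)
                  (Filter.Eventually.of_forall fun θ' => ?_)
                by_cases hc : g (θ, p.1) ≠ g (θ', p.1) <;> simp [hc]
            _ = 1 := by simp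
      _ = 1 := by simp
  -- conclude
  have e2 : (∫ p, A p ∂D) - ∫ p, B p ∂D = ∫ p, (A p - B p) ∂D :=
    (integral_sub intA intB).symm
  show |(∫ p, A p ∂D) - ∫ p, B p ∂D| ≤ ∫ p, C p ∂D
  rw [e2, ← Real.norm_eq_abs]
  calc ‖∫ p, (A p - B p) ∂D‖ ≤ ∫ p, ‖A p - B p‖ ∂D := norm_integral_le_integral_norm _
    _ ≤ ∫ p, C p ∂D := by
        refine integral_mono_of_nonneg
          (Filter.Eventually.of_forall fun p => norm_nonneg _) intC
          (Filter.Eventually.of_forall fun p => ?_)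
        show ‖A p - B p‖ ≤ C p
        rw [Real.norm_eq_abs]
        exact key p
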